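/- In the setting of the previous computation with c₁ = ln λ₁, c₂ = ln λ₂ and λ₁λ₂ = 1, λ₁ ≠ 1, the mean curvature vector of the flow spanned by E₃ is τ = (ln λ₂)E₁, and its transverse divergence is div^Q τ = (ln λ₂)Γ₁₁¹ + (ln λ₂)Γ₂₁² = −(ln λ₂)(ln λ₁) = (ln λ₁)² > 0. -/

import Mathlib

open scoped RealInnerProductSpace

/-- In the Lie-algebra setting of the `T³_A` example, with `c₁ = ln λ₁`, `c₂ = ln λ₂`,
`λ₁λ₂ = 1`, `λ₁ ≠ 1` and structure constants `[E₁,E₂] = (ln λ₁)E₂`,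
`[E₁,E₃] = (ln λ₂)E₃`, `[E₂,E₃] = 0`, the mean curvature vector of the flow spanned by
`E₃` is `τ = Γ₃₃¹E₁ + Γ₃₃²E₂ = (ln λ₂)E₁`, and its transverse divergence is
`div^Q τ = (ln λ₂)Γ₁₁¹ + (ln λ₂)Γ₂₁² = −(ln λ₂)(ln λ₁) = (ln λ₁)² > 0`. -/
theorem stmt_12 {V : Type*} [NormedAddCommGroup V] [InnerProductSpace ℝ V]
    (E : Fin 3 → V) (hE : Orthonormal ℝ E) (hbasis : Submodule.span ℝ (Set.range E) = ⊤)
    (bracket : V → V → V) (hanti : ∀ X Y, bracket X Y = -bracket Y X)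
    (l₁ l₂ : ℝ) (h₁ : 0 < l₁) (h₂ : 0 < l₂) (hmul : l₁ * l₂ = 1) (hne : l₁ ≠ 1)
    (h₁₂ : bracket (E 0) (E 1) = Real.log l₁ • E 1)
    (h₁₃ : bracket (E 0) (E 2) = Real.log l₂ • E 2)
    (h₂₃ : bracket (E 1) (E 2) = 0)
    (C : Fin 3 → Fin 3 → Fin 3 → ℝ)
    (hC : ∀ i j k, C i j k = ⟪bracket (E i) (E j), E k⟫)
    (Γ : Fin 3 → Fin 3 → Fin 3 → ℝ)
    (hΓ : ∀ i j k, Γ i j k = (C i j k + C k i j + C k j i) / 2)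
    (τ : V) (hτ : τ = Γ 2 2 0 • E 0 + Γ 2 2 1 • E 1) :
    τ = Real.log l₂ • E 0 ∧
    Real.log l₂ * Γ 0 0 0 + Real.log l₂ * Γ 1 0 1 = -(Real.log l₂ * Real.log l₁) ∧
    -(Real.log l₂ * Real.log l₁) = (Real.log l₁) ^ 2 ∧
    0 < (Real.log l₁) ^ 2 := by

  have hinner : ∀ i j : Fin 3, ⟪E i, E j⟫ = if i = j then 1 else 0 :=
    orthonormal_iff_ite.mp hE
  have hself : ∀ X, bracket X X = 0 := by
    intro X
    have h := hanti X X
    have h2 : (2:ℝ) • bracket X X = 0 := by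
      rw [two_smul]; nth_rewrite 1 [h]; abel
    simpa using h2
  have hlog : Real.log l₂ = - Real.log l₁ := by
    have := Real.log_mul (ne_of_gt h₁) (ne_of_gt h₂)
    rw [hmul, Real.log_one] at this; linarith
  have hll : Real.log l₁ ≠ 0 := by
    intro h
    have h3 := Real.exp_log h₁
    rw [h, Real.exp_zero] at h3
    exact hne h3.symm
  have hC220 : C 2 2 0 = 0 := by rw [hC, hself]; simp
  have hC221 : C 2 2 1 = 0 := by rw [hC, hself]; simp
  have hC022 : C 0 2 2 = Real.log l₂ := by
    rw [hC, h₁₃, inner_smul_left]; simp [hinner, hE.1]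
  have hC122 : C 1 2 2 = 0 := by rw [hC, h₂₃]; simp
  have hC000 : C 0 0 0 = 0 := by rw [hC, hself]; simp
  have hC101 : C 1 0 1 = - Real.log l₁ := by
    rw [hC, hanti, h₁₂, inner_neg_left, inner_smul_left]; simp [hinner, hE.1]
  have hC110 : C 1 1 0 = 0 := by rw [hC, hself]; simp
  have hΓ220 : Γ 2 2 0 = Real.log l₂ := by
    rw [hΓ, hC220, hC022]; ring
  have hΓ221 : Γ 2 2 1 = 0 := by
    rw [hΓ, hC221, hC122]; ring
  have hΓ000 : Γ 0 0 0 = 0 := by rw [hΓ, hC000]; ring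
  have hΓ101 : Γ 1 0 1 = - Real.log l₁ := by
    rw [hΓ, hC101, hC110]; ring
  refine ⟨?_, ?_, ?_, ?_⟩
  · rw [hτ, hΓ220, hΓ221]; simp
  · rw [hΓ000, hΓ101]; ring
  · rw [hlog]; ring
  · positivity
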